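/- Let R be a commutative ring, n : ℕ, and i₀ : Fin (n+1) with i₀ + 1 ≤ n (so that i₀ and i₀+1 are indices of Fin (n+1)). Let X and Y be units of the ring Matrix (Fin (n+1)) (Fin (n+1)) R such that the underlying matrix of X is unipotent upper triangular and the underlying matrix of Y lies in U_{i₀,i₀+1}. Let ϖ be the subgroup of the unit group generated by {X, Y}. Then Y commutes with every element of the commutator subgroup ⁅ϖ, ϖ⁆; that is, for all W ∈ ⁅ϖ, ϖ⁆, Y * W = W * Y. -/

import Mathlib

/-- A matrix is unipotent upper triangular: `1`s on the diagonal, `0`s below it. -/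
def IsUnipotentUT {R : Type*} [CommRing R] {n : ℕ}
    (M : Matrix (Fin (n + 1)) (Fin (n + 1)) R) : Prop :=
  (∀ i, M i i = 1) ∧ ∀ i j, j < i → M i j = 0

/-- Membership in `U_{i₀,j₀}`: unipotent upper triangular, and all off-diagonal
entries vanish except possibly those in positions `(i,j)` with `i ≤ i₀` and `j₀ ≤ j`. -/
def MemU {R : Type*} [CommRing R] {n : ℕ} (i₀ j₀ : Fin (n + 1))
    (M : Matrix (Fin (n + 1)) (Fin (n + 1)) R) : Prop :=
  IsUnipotentUT M ∧ ∀ i j, i ≠ j → ¬(i ≤ i₀ ∧ j₀ ≤ j) → M i j = 0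

namespace Stmt8Aux

open Matrix

variable {R : Type*} [CommRing R] {n : ℕ} {i₀ j₀ : Fin (n + 1)}

/-- Support in the block `{i ≤ i₀} × {j₀ ≤ j}`. -/
def InB (i₀ j₀ : Fin (n + 1)) (b : Matrix (Fin (n + 1)) (Fin (n + 1)) R) : Prop :=
  ∀ i j, ¬(i ≤ i₀ ∧ j₀ ≤ j) → b i j = 0

lemma InB.mul_ut {b M : Matrix (Fin (n + 1)) (Fin (n + 1)) R} (hb : InB i₀ j₀ b)
    (hM : M.BlockTriangular id) : InB i₀ j₀ (b * M) := by
  intro i j hij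
  rw [Matrix.mul_apply]
  refine Finset.sum_eq_zero fun k _ => ?_
  by_cases hk : i ≤ i₀ ∧ j₀ ≤ k
  · have hMk : M k j = 0 := by
      apply hM
      have hj : ¬ j₀ ≤ j := fun h => hij ⟨hk.1, h⟩
      exact lt_of_lt_of_le (lt_of_not_ge hj) hk.2
    simp [hMk]
  · simp [hb i k hk]

lemma ut_mul_InB {M b : Matrix (Fin (n + 1)) (Fin (n + 1)) R}
    (hM : M.BlockTriangular id) (hb : InB i₀ j₀ b) : InB i₀ j₀ (M * b) := by
  intro i j hij
  rw [Matrix.mul_apply]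
  refine Finset.sum_eq_zero fun k _ => ?_
  by_cases hk : k ≤ i₀ ∧ j₀ ≤ j
  · have hMk : M i k = 0 := by
      apply hM
      have hi : ¬ i ≤ i₀ := fun h => hij ⟨h, hk.2⟩
      exact lt_of_le_of_lt hk.1 (lt_of_not_ge hi)
    simp [hMk]
  · simp [hb k j hk]

lemma InB.mul_InB (h0 : i₀ < j₀) {b c : Matrix (Fin (n + 1)) (Fin (n + 1)) R}
    (hb : InB i₀ j₀ b) (hc : InB i₀ j₀ c) : b * c = 0 := by
  ext i j
  rw [Matrix.mul_apply, Matrix.zero_apply]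
  refine Finset.sum_eq_zero fun k _ => ?_
  by_cases hk : i ≤ i₀ ∧ j₀ ≤ k
  · have hck : c k j = 0 := hc k j (fun h => absurd (hk.2.trans h.1) (not_le_of_gt h0))
    simp [hck]
  · simp [hb i k hk]

/-- `M` is `1` plus a block-supported matrix. -/
def Near1 (i₀ j₀ : Fin (n + 1)) (M : Matrix (Fin (n + 1)) (Fin (n + 1)) R) : Prop :=
  InB i₀ j₀ (M - 1)

lemma Near1.one : Near1 i₀ j₀ (1 : Matrix (Fin (n + 1)) (Fin (n + 1)) R) := by
  intro i j _; simp

lemma Near1.ut (h0 : i₀ < j₀) {M : Matrix (Fin (n + 1)) (Fin (n + 1)) R}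
    (hM : Near1 i₀ j₀ M) : M.BlockTriangular id := by
  intro i j hij
  have h := hM i j (fun h => absurd ((h.1.trans_lt h0).trans_le h.2) (not_lt_of_gt hij))
  have hne : i ≠ j := ne_of_gt hij
  rw [Matrix.sub_apply, Matrix.one_apply_ne hne, sub_zero] at h
  exact h

lemma Near1.mul_eq (h0 : i₀ < j₀) {M N : Matrix (Fin (n + 1)) (Fin (n + 1)) R}
    (hM : Near1 i₀ j₀ M) (hN : Near1 i₀ j₀ N) : M * N = M + N - 1 := by
  have h : (M - 1) * (N - 1) = 0 := InB.mul_InB h0 hM hN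
  have h2 : M * N = (M - 1) * (N - 1) + M + N - 1 := by noncomm_ring
  rw [h2, h, zero_add]

lemma Near1.comm (h0 : i₀ < j₀) {M N : Matrix (Fin (n + 1)) (Fin (n + 1)) R}
    (hM : Near1 i₀ j₀ M) (hN : Near1 i₀ j₀ N) : M * N = N * M := by
  rw [hM.mul_eq h0 hN, hN.mul_eq h0 hM]
  abel

lemma Near1.mul (h0 : i₀ < j₀) {M N : Matrix (Fin (n + 1)) (Fin (n + 1)) R}
    (hM : Near1 i₀ j₀ M) (hN : Near1 i₀ j₀ N) : Near1 i₀ j₀ (M * N) := by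
  intro i j hij
  have h1 := hM i j hij
  have h2 := hN i j hij
  rw [Matrix.sub_apply] at h1 h2 ⊢
  rw [hM.mul_eq h0 hN]
  rw [Matrix.sub_apply, Matrix.add_apply]
  linear_combination h1 + h2

lemma Near1.two_sub (h0 : i₀ < j₀) {M : Matrix (Fin (n + 1)) (Fin (n + 1)) R}
    (hM : Near1 i₀ j₀ M) : Near1 i₀ j₀ (2 - M) := by
  intro i j hij
  have h1 := hM i j hij
  rw [Matrix.sub_apply] at h1 ⊢
  rw [Matrix.sub_apply]
  have h2 : (2 : Matrix (Fin (n + 1)) (Fin (n + 1)) R) i j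
      = (1 : Matrix (Fin (n + 1)) (Fin (n + 1)) R) i j
        + (1 : Matrix (Fin (n + 1)) (Fin (n + 1)) R) i j := by
    have : (2 : Matrix (Fin (n + 1)) (Fin (n + 1)) R)
        = (1 : Matrix (Fin (n + 1)) (Fin (n + 1)) R) + 1 := by norm_num
    rw [this, Matrix.add_apply]
  rw [h2]
  linear_combination -h1

lemma Near1.unitsInv (h0 : i₀ < j₀) {W : (Matrix (Fin (n + 1)) (Fin (n + 1)) R)ˣ}
    (hW : Near1 i₀ j₀ (W : Matrix (Fin (n + 1)) (Fin (n + 1)) R)) :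
    Near1 i₀ j₀ ((↑W⁻¹ : Matrix (Fin (n + 1)) (Fin (n + 1)) R)) := by
  have hW2 : Near1 i₀ j₀ (2 - (W : Matrix (Fin (n + 1)) (Fin (n + 1)) R)) := hW.two_sub h0
  have key : (W : Matrix (Fin (n + 1)) (Fin (n + 1)) R)
      * (2 - (W : Matrix (Fin (n + 1)) (Fin (n + 1)) R)) = 1 := by
    rw [hW.mul_eq h0 hW2, show (2 : Matrix (Fin (n + 1)) (Fin (n + 1)) R) = 1 + 1 from
      one_add_one_eq_two.symm]
    abel
  rw [Units.inv_eq_of_mul_eq_one_right key]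
  exact hW2

lemma Near1.conj (h0 : i₀ < j₀) {A Ainv u : Matrix (Fin (n + 1)) (Fin (n + 1)) R}
    (hA : A.BlockTriangular id) (hAinv : Ainv.BlockTriangular id)
    (hAA : A * Ainv = 1) (hu : Near1 i₀ j₀ u) : Near1 i₀ j₀ (A * u * Ainv) := by
  have heq : A * (u - 1) * Ainv = A * u * Ainv - 1 := by
    rw [Matrix.mul_sub, Matrix.mul_one, Matrix.sub_mul, hAA]
  show InB i₀ j₀ (A * u * Ainv - 1)
  rw [← heq]
  exact InB.mul_ut (ut_mul_InB hA hu) hAinv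

variable (R n) in
/-- The subgroup of units that are upper triangular with upper-triangular inverse. -/
def T : Subgroup (Matrix (Fin (n + 1)) (Fin (n + 1)) R)ˣ where
  carrier := {W | ((W : Matrix (Fin (n + 1)) (Fin (n + 1)) R)).BlockTriangular id ∧
    ((↑W⁻¹ : Matrix (Fin (n + 1)) (Fin (n + 1)) R)).BlockTriangular id}
  one_mem' := ⟨by simpa using Matrix.blockTriangular_one,
    by simpa using Matrix.blockTriangular_one⟩
  mul_mem' := by
    rintro a b ⟨ha, ha'⟩ ⟨hb, hb'⟩
    refine ⟨?_, ?_⟩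
    · rw [Units.val_mul]; exact ha.mul hb
    · rw [_root_.mul_inv_rev, Units.val_mul]; exact hb'.mul ha'
  inv_mem' := by
    rintro a ⟨ha, ha'⟩
    exact ⟨ha', by rw [inv_inv]; exact ha⟩

variable (i₀ j₀) in
/-- The subgroup of units whose matrix is `1` plus a block-supported matrix. -/
def H (h0 : i₀ < j₀) : Subgroup (Matrix (Fin (n + 1)) (Fin (n + 1)) R)ˣ where
  carrier := {W | Near1 i₀ j₀ (W : Matrix (Fin (n + 1)) (Fin (n + 1)) R)}
  one_mem' := by simpa using (Near1.one : Near1 i₀ j₀ (1 : Matrix (Fin (n + 1)) (Fin (n + 1)) R))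
  mul_mem' := by
    intro a b ha hb
    show Near1 i₀ j₀ ((↑(a * b) : Matrix (Fin (n + 1)) (Fin (n + 1)) R))
    rw [Units.val_mul]
    exact Near1.mul h0 ha hb
  inv_mem' := by
    intro a ha
    exact Near1.unitsInv h0 ha

end Stmt8Aux

open Stmt8Aux in
/-- for units `X, Y` of the matrix ring with `X` unipotent upper
triangular and `Y ∈ U_{i₀, i₀+1}`, and `ϖ` the subgroup of units generated by
`{X, Y}`, `Y` commutes with every element of `⁅ϖ, ϖ⁆`. -/
theorem stmt_8 {R : Type*} [CommRing R] {n : ℕ} (i₀ : Fin (n + 1))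
    (hi₀ : (i₀ : ℕ) + 1 ≤ n)
    (X Y : (Matrix (Fin (n + 1)) (Fin (n + 1)) R)ˣ)
    (hX : IsUnipotentUT (X : Matrix (Fin (n + 1)) (Fin (n + 1)) R))
    (hY : MemU i₀ (⟨(i₀ : ℕ) + 1, by omega⟩ : Fin (n + 1))
      (Y : Matrix (Fin (n + 1)) (Fin (n + 1)) R)) :
    ∀ W ∈ ⁅Subgroup.closure ({X, Y} : Set (Matrix (Fin (n + 1)) (Fin (n + 1)) R)ˣ),
        Subgroup.closure ({X, Y} : Set (Matrix (Fin (n + 1)) (Fin (n + 1)) R)ˣ)⁆,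
      Y * W = W * Y := by
  set j₀ : Fin (n + 1) := ⟨(i₀ : ℕ) + 1, by omega⟩ with hj₀
  have h0 : i₀ < j₀ := by
    rw [Fin.lt_def]; simp [hj₀]
  -- Y is 1 + block
  have hYn : Near1 i₀ j₀ (Y : Matrix (Fin (n + 1)) (Fin (n + 1)) R) := by
    intro i j hij
    rw [Matrix.sub_apply]
    by_cases h : i = j
    · subst h; simp [hY.1.1 i]
    · rw [hY.2 i j h hij, Matrix.one_apply_ne h, sub_zero]
  -- memberships in T
  have hXT : X ∈ T R n := by
    have hXut : ((X : Matrix (Fin (n + 1)) (Fin (n + 1)) R)).BlockTriangular id :=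
      fun i j h => hX.2 i j h
    haveI : Invertible (X : Matrix (Fin (n + 1)) (Fin (n + 1)) R) := X.invertible
    refine ⟨hXut, ?_⟩
    rw [Matrix.coe_units_inv]
    exact Matrix.blockTriangular_inv_of_blockTriangular hXut
  have hHleT : H i₀ j₀ h0 ≤ T R n := by
    intro W hW
    have hW' : Near1 i₀ j₀ (W : Matrix (Fin (n + 1)) (Fin (n + 1)) R) := hW
    exact ⟨hW'.ut h0, (hW'.unitsInv h0).ut h0⟩
  have hYT : Y ∈ T R n := hHleT hYn
  -- normality of H inside T
  set H' : Subgroup (T R n) := (H i₀ j₀ h0).subgroupOf (T R n) with hH'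
  haveI hnorm : H'.Normal := by
    constructor
    intro u hu g
    rw [hH', Subgroup.mem_subgroupOf] at hu ⊢
    show Near1 i₀ j₀ ((↑(↑(g * u * g⁻¹) : (Matrix (Fin (n + 1)) (Fin (n + 1)) R)ˣ) :
      Matrix (Fin (n + 1)) (Fin (n + 1)) R))
    have hcoe : (↑(↑(g * u * g⁻¹) : (Matrix (Fin (n + 1)) (Fin (n + 1)) R)ˣ) :
        Matrix (Fin (n + 1)) (Fin (n + 1)) R) =
        (↑(g : (Matrix (Fin (n + 1)) (Fin (n + 1)) R)ˣ) :
          Matrix (Fin (n + 1)) (Fin (n + 1)) R)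
        * (↑(u : (Matrix (Fin (n + 1)) (Fin (n + 1)) R)ˣ) :
          Matrix (Fin (n + 1)) (Fin (n + 1)) R)
        * (↑((g : (Matrix (Fin (n + 1)) (Fin (n + 1)) R)ˣ))⁻¹ :
          Matrix (Fin (n + 1)) (Fin (n + 1)) R) := by
      rfl
    rw [hcoe]
    exact Near1.conj h0 g.2.1 g.2.2 (Units.mul_inv _) hu
  -- quotient map
  let f : T R n →* (T R n) ⧸ H' := QuotientGroup.mk' H'
  set XT : T R n := ⟨X, hXT⟩ with hXTdef
  set YT : T R n := ⟨Y, hYT⟩ with hYTdef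
  have hfY : f YT = 1 := (QuotientGroup.eq_one_iff _).mpr (Subgroup.mem_subgroupOf.mpr hYn)
  -- every element of the closure maps into the cyclic subgroup generated by f XT
  have key : ∀ g, g ∈ Subgroup.closure ({X, Y} :
      Set (Matrix (Fin (n + 1)) (Fin (n + 1)) R)ˣ) →
      ∃ hgT : g ∈ T R n, f ⟨g, hgT⟩ ∈ Subgroup.closure {f XT} := by
    have hmemX : ∃ h : X ∈ T R n, f ⟨X, h⟩ ∈ Subgroup.closure {f XT} :=
      ⟨hXT, Subgroup.subset_closure rfl⟩
    have hmemY : ∃ h : Y ∈ T R n, f ⟨Y, h⟩ ∈ Subgroup.closure {f XT} :=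
      ⟨hYT, by rw [show (⟨Y, hYT⟩ : T R n) = YT from rfl, hfY]; exact one_mem _⟩
    intro g hg
    induction hg using Subgroup.closure_induction with
    | mem x hx =>
      rcases hx with hx | hx
      · exact hx ▸ hmemX
      · simp only [Set.mem_singleton_iff] at hx
        exact hx ▸ hmemY
    | one => exact ⟨one_mem _, by convert one_mem (Subgroup.closure {f XT}); exact map_one f⟩
    | mul x y hx hy ihx ihy =>
      obtain ⟨hxT, px⟩ := ihx
      obtain ⟨hyT, py⟩ := ihy
      refine ⟨mul_mem hxT hyT, ?_⟩
      have : (⟨x * y, mul_mem hxT hyT⟩ : T R n) = ⟨x, hxT⟩ * ⟨y, hyT⟩ := rfl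
      rw [this, map_mul]
      exact mul_mem px py
    | inv x hx ihx =>
      obtain ⟨hxT, px⟩ := ihx
      refine ⟨inv_mem hxT, ?_⟩
      have : (⟨x⁻¹, inv_mem hxT⟩ : T R n) = (⟨x, hxT⟩ : T R n)⁻¹ := rfl
      rw [this, map_inv]
      exact inv_mem px
  -- commutator subgroup lands in H
  have hcomm : ⁅Subgroup.closure ({X, Y} : Set (Matrix (Fin (n + 1)) (Fin (n + 1)) R)ˣ),
      Subgroup.closure ({X, Y} : Set (Matrix (Fin (n + 1)) (Fin (n + 1)) R)ˣ)⁆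
      ≤ H i₀ j₀ h0 := by
    rw [Subgroup.commutator_le]
    intro g hg h hh
    obtain ⟨hgT, pg⟩ := key g hg
    obtain ⟨hhT, ph⟩ := key h hh
    obtain ⟨a, ha⟩ := Subgroup.mem_closure_singleton.mp pg
    obtain ⟨b, hb⟩ := Subgroup.mem_closure_singleton.mp ph
    have hcommute : Commute (f ⟨g, hgT⟩) (f ⟨h, hhT⟩) := by
      rw [← ha, ← hb]
      exact (Commute.refl (f XT)).zpow_zpow a b
    open scoped commutatorElement in
    have h1 : f ⁅(⟨g, hgT⟩ : T R n), (⟨h, hhT⟩ : T R n)⁆ = 1 := by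
      rw [map_commutatorElement]
      exact commutatorElement_eq_one_iff_commute.mpr hcommute
    open scoped commutatorElement in
    have h2 : ⁅(⟨g, hgT⟩ : T R n), (⟨h, hhT⟩ : T R n)⁆ ∈ H' :=
      (QuotientGroup.eq_one_iff _).mp h1
    rw [hH', Subgroup.mem_subgroupOf] at h2
    exact h2
  -- conclude
  intro W hW
  have hWH : Near1 i₀ j₀ (W : Matrix (Fin (n + 1)) (Fin (n + 1)) R) := hcomm hW
  exact Units.ext (Near1.comm h0 hYn hWH)
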